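/- Let n, k, m be positive integers with n ≥ km, and let F = {F_1, ..., F_m} be a saturated family of k-graphs on the common vertex set [n]. Then for each vertex v ∈ [n] and each i ∈ [m], either d_{F_i}(v) ≤ C(n−1,k−1) − C(n−1−k(m−1), k−1) or d_{F_i}(v) = C(n−1,k−1), where C(a,b) denotes the binomial coefficient. -/
import Mathlib


open Finset

/-- `f(n,m,k) = max{C(n,k) - C(n-m+1,k), C(km-1,k)}`. -/
def fEMC (n m k : ℕ) : ℕ :=
  max (Nat.choose n k - Nat.choose (n - m + 1) k) (Nat.choose (k * m - 1) k)

/-- `F` is a `k`-graph on the vertex set `[n] = {1,…,n}`. -/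
def IsKGraphOn (n k : ℕ) (F : Finset (Finset ℕ)) : Prop :=
  ∀ e ∈ F, e ⊆ Finset.Icc 1 n ∧ e.card = k

/-- The family `F = (F_1,…,F_m)` admits a rainbow matching. -/
def HasRainbowMatching {m : ℕ} (F : Fin m → Finset (Finset ℕ)) : Prop :=
  ∃ e : Fin m → Finset ℕ, (∀ i, e i ∈ F i) ∧
    ∀ i j : Fin m, i ≠ j → Disjoint (e i) (e j)

/-- Degree of a vertex `v` in the hypergraph `F`. -/
def degOf (F : Finset (Finset ℕ)) (v : ℕ) : ℕ := (F.filter (fun e => v ∈ e)).card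

/-- The family `F` of `k`-graphs on `[n]` is saturated. -/
def Saturated (n k : ℕ) {m : ℕ} (F : Fin m → Finset (Finset ℕ)) : Prop :=
  ¬ HasRainbowMatching F ∧
    ∀ (i : Fin m) (e : Finset ℕ), e ⊆ Finset.Icc 1 n → e.card = k → e ∉ F i →
      HasRainbowMatching (Function.update F i (insert e (F i)))

/-- Elementwise domination order: the increasing enumeration of `e` is
pointwise at most that of `f` (this forces `e.card = f.card`). -/
def DomLE (e f : Finset ℕ) : Prop :=
  List.Forall₂ (· ≤ ·) (e.sort (· ≤ ·)) (f.sort (· ≤ ·))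

/-- `F` is a stable hypergraph on vertex set `[n]`. -/
def StableGraph (n : ℕ) (F : Finset (Finset ℕ)) : Prop :=
  ∀ e f : Finset ℕ, e ⊆ Finset.Icc 1 n → DomLE e f → f ∈ F → e ∈ F

/-- `S(n,m,k)`: all `k`-subsets of `[n]` meeting `[m-1]`. -/
def SGraph (n m k : ℕ) : Finset (Finset ℕ) :=
  ((Finset.Icc 1 n).powersetCard k).filter (fun e => (e ∩ Finset.Icc 1 (m - 1)).Nonempty)

/-- `D(n,m,k)`: all `k`-subsets of `[km-1]`. -/
def DGraph (n m k : ℕ) : Finset (Finset ℕ) :=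
  (Finset.Icc 1 (k * m - 1)).powersetCard k

/-- `H(F)`: the `(k+1)`-graph on `[n] ∪ {v_1,…,v_m}`, where `v_i` is encoded
as the natural number `n + i`, with edges `e ∪ {v_i}` for `e ∈ F_i`. -/
def HF (n : ℕ) {m : ℕ} (F : Fin m → Finset (Finset ℕ)) : Finset (Finset ℕ) :=
  Finset.univ.biUnion (fun i : Fin m => (F i).image (fun e => insert (n + i.1 + 1) e))

/-- `H_S(n,m,k) = H(F)` with every `F_i = S(n,m,k)`. -/
def HS (n m k : ℕ) : Finset (Finset ℕ) := HF n (fun _ : Fin m => SGraph n m k)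

/-- `H_D(n,m,k) = H(F)` with every `F_i = D(n,m,k)`. -/
def HD (n m k : ℕ) : Finset (Finset ℕ) := HF n (fun _ : Fin m => DGraph n m k)

/-- `H*(F)`: `H(F)` together with the edges `e ∪ {u_j}`, `e` a `k`-subset of `[n]`,
`j ∈ [r]`, `r = ⌊n/k⌋ - m`, where `u_j` is encoded as the natural number `n + m + j`. -/
def HstarF (n k : ℕ) {m : ℕ} (F : Fin m → Finset (Finset ℕ)) : Finset (Finset ℕ) :=
  HF n F ∪ Finset.univ.biUnion (fun j : Fin (n / k - m) =>
    ((Finset.Icc 1 n).powersetCard k).image (fun e => insert (n + m + j.1 + 1) e))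

/-- A set of edges is a matching if its edges are pairwise disjoint. -/
def IsMatching (M : Finset (Finset ℕ)) : Prop :=
  ∀ e ∈ M, ∀ f ∈ M, e ≠ f → Disjoint e f

/-- `H₂` is `ε`-close to `H₁` (as `u`-graphs on a vertex set of size `N`):
`|E(H₁) \ E(H₂)| ≤ ε · N^u`. -/
def IsEpsClose (ε : ℝ) (N u : ℕ) (H₁ H₂ : Finset (Finset ℕ)) : Prop :=
  (((H₁ \ H₂).card : ℝ)) ≤ ε * (N : ℝ) ^ u

lemma card_filter_mem_powersetCard (s : Finset ℕ) (v : ℕ) (hv : v ∈ s) (k : ℕ) (hk : 0 < k) :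
    ((s.powersetCard k).filter (fun e => v ∈ e)).card = (s.card - 1).choose (k - 1) := by
  have h : ((s.powersetCard k).filter (fun e => v ∈ e)).card
      = ((s.erase v).powersetCard (k - 1)).card := by
    refine Finset.card_bij' (fun e _ => e.erase v) (fun f _ => insert v f) ?_ ?_ ?_ ?_
    · intro e he
      simp only [mem_filter, Finset.mem_powersetCard] at he
      rw [Finset.mem_powersetCard]
      exact ⟨Finset.erase_subset_erase v he.1.1,
        by rw [Finset.card_erase_of_mem he.2, he.1.2]⟩
    · intro f hf
      rw [Finset.mem_powersetCard] at hf
      have hvf : v ∉ f := fun h => (Finset.mem_erase.mp (hf.1 h)).1 rfl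
      simp only [mem_filter, Finset.mem_powersetCard]
      refine ⟨⟨?_, ?_⟩, Finset.mem_insert_self v f⟩
      · exact Finset.insert_subset hv (hf.1.trans (Finset.erase_subset v s))
      · rw [Finset.card_insert_of_notMem hvf, hf.2]; omega
    · intro e he
      simp only [mem_filter] at he
      exact Finset.insert_erase he.2
    · intro f hf
      rw [Finset.mem_powersetCard] at hf
      have hvf : v ∉ f := fun h => (Finset.mem_erase.mp (hf.1 h)).1 rfl
      exact Finset.erase_insert hvf
  rw [h, Finset.card_powersetCard, Finset.card_erase_of_mem hv]

/-- degrees in a saturated family. -/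
theorem degree_in_saturated_family (n k m : ℕ) (hk : 0 < k) (hm : 0 < m)
    (hn : n ≥ k * m)
    (F : Fin m → Finset (Finset ℕ)) (hF : ∀ i, IsKGraphOn n k (F i))
    (hsat : Saturated n k F) :
    ∀ v ∈ Finset.Icc 1 n, ∀ i : Fin m,
      degOf (F i) v ≤ Nat.choose (n - 1) (k - 1) - Nat.choose (n - 1 - k * (m - 1)) (k - 1) ∨
      degOf (F i) v = Nat.choose (n - 1) (k - 1) := by
  intro v hv i
  by_contra hcon
  push_neg at hcon
  obtain ⟨h1, h2⟩ := hcon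
  set s := Finset.Icc 1 n with hs
  have hscard : s.card = n := by simp [hs]
  set T := Nat.choose (n - 1) (k - 1) with hT
  set B := Nat.choose (n - 1 - k * (m - 1)) (k - 1) with hB
  set P := (s.powersetCard k).filter (fun e => v ∈ e) with hP
  have hPcard : P.card = T := by
    rw [hP, card_filter_mem_powersetCard s v hv k hk, hscard]
  -- F i filtered is a subset of P
  set Fi := (F i).filter (fun e => v ∈ e) with hFi
  have hFisub : Fi ⊆ P := by
    intro e he
    simp only [hFi, mem_filter] at he
    simp only [hP, mem_filter, Finset.mem_powersetCard]
    exact ⟨⟨(hF i e he.1).1, (hF i e he.1).2⟩, he.2⟩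
  have hdegT : degOf (F i) v ≤ T := by
    rw [← hPcard]; exact Finset.card_le_card hFisub
  have hgt : T - B < degOf (F i) v := h1
  have hdeglt : degOf (F i) v < T := lt_of_le_of_ne hdegT h2
  -- the missing set
  set M := P \ Fi with hM
  have hMcard : M.card = T - degOf (F i) v := by
    rw [hM, Finset.card_sdiff_of_subset hFisub, hPcard]; rfl
  have hMne : M.Nonempty := by
    rw [← Finset.card_pos, hMcard]; omega
  obtain ⟨e, heM⟩ := hMne
  have heP : e ∈ P := (Finset.mem_sdiff.mp heM).1
  have heFi : e ∉ Fi := (Finset.mem_sdiff.mp heM).2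
  simp only [hP, mem_filter, Finset.mem_powersetCard] at heP
  obtain ⟨⟨hes, hek⟩, hve⟩ := heP
  have heF : e ∉ F i := fun h => heFi (by simp [hFi, mem_filter]; exact ⟨h, hve⟩)
  -- saturation gives a rainbow matching of the updated family
  obtain ⟨g, hg1, hg2⟩ := hsat.2 i e hes hek heF
  have hgji : ∀ j : Fin m, j ≠ i → g j ∈ F j := by
    intro j hj
    have := hg1 j
    rwa [Function.update_of_ne hj] at this
  have hgi : g i = e := by
    have := hg1 i
    rw [Function.update_self] at this
    rcases Finset.mem_insert.mp this with h | h
    · exact h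
    · exfalso
      apply hsat.1
      refine ⟨g, fun j => ?_, hg2⟩
      by_cases hji : j = i
      · subst hji; exact h
      · exact hgji j hji
  -- the union of the other edges
  set U := (Finset.univ.erase i).biUnion g with hU
  have hUcard : U.card ≤ k * (m - 1) := by
    calc U.card ≤ ∑ j ∈ Finset.univ.erase i, (g j).card := Finset.card_biUnion_le
    _ = ∑ j ∈ Finset.univ.erase i, k := by
        apply Finset.sum_congr rfl
        intro j hj
        exact (hF j (g j) (hgji j (Finset.mem_erase.mp hj).1)).2
    _ = (m - 1) * k := by
        rw [Finset.sum_const, smul_eq_mul, Finset.card_erase_of_mem (Finset.mem_univ i),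
          Finset.card_univ, Fintype.card_fin]
    _ = k * (m - 1) := Nat.mul_comm _ _
  have hUs : U ⊆ s := by
    intro x hx
    rw [hU, Finset.mem_biUnion] at hx
    obtain ⟨j, hj, hxj⟩ := hx
    exact (hF j (g j) (hgji j (Finset.mem_erase.mp hj).1)).1 hxj
  have hvU : v ∉ U := by
    rw [hU, Finset.mem_biUnion]
    rintro ⟨j, hj, hvj⟩
    have hji : j ≠ i := (Finset.mem_erase.mp hj).1
    have hdisj := hg2 i j (fun h => hji h.symm)
    rw [hgi] at hdisj
    exact (Finset.disjoint_left.mp hdisj hve) hvj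
  -- the set of candidate replacements
  set t := s \ insert v U with ht
  have htcard : n - 1 - k * (m - 1) ≤ t.card := by
    have hsub : insert v U ⊆ s := Finset.insert_subset hv hUs
    rw [ht, Finset.card_sdiff_of_subset hsub, hscard]
    have : (insert v U).card ≤ 1 + k * (m - 1) := by
      calc (insert v U).card ≤ U.card + 1 := Finset.card_insert_le v U
      _ ≤ k * (m - 1) + 1 := by omega
      _ = 1 + k * (m - 1) := by omega
    omega
  set A := (t.powersetCard (k - 1)).image (insert v) with hA
  have hvt : v ∉ t := by simp [ht]
  have hAcard : B ≤ A.card := by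
    rw [hA, Finset.card_image_of_injOn, Finset.card_powersetCard]
    · exact Nat.choose_le_choose (k - 1) htcard
    · intro a ha b hb hab
      rw [Finset.mem_coe, Finset.mem_powersetCard] at ha hb
      have hva : v ∉ a := fun h => hvt (ha.1 h)
      have hvb : v ∉ b := fun h => hvt (hb.1 h)
      rw [← Finset.erase_insert hva, ← Finset.erase_insert hvb, hab]
  -- properties of A's elements
  have hAmem : ∀ f ∈ A, f ∈ P ∧ Disjoint f U := by
    intro f hf
    rw [hA, Finset.mem_image] at hf
    obtain ⟨a, ha, rfl⟩ := hf
    rw [Finset.mem_powersetCard] at ha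
    have hva : v ∉ a := fun h => hvt (ha.1 h)
    constructor
    · simp only [hP, mem_filter, Finset.mem_powersetCard]
      refine ⟨⟨?_, ?_⟩, Finset.mem_insert_self v a⟩
      · exact Finset.insert_subset hv (ha.1.trans (Finset.sdiff_subset))
      · rw [Finset.card_insert_of_notMem hva, ha.2]; omega
    · rw [Finset.disjoint_left]
      intro x hx hxU
      rcases Finset.mem_insert.mp hx with rfl | hxa
      · exact hvU hxU
      · have := ha.1 hxa
        rw [ht, Finset.mem_sdiff] at this
        exact this.2 (Finset.mem_insert_of_mem hxU)
  -- some element of A is in F i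
  have hexists : ∃ f ∈ A, f ∈ F i := by
    by_contra hno
    push_neg at hno
    have hAM : A ⊆ M := by
      intro f hf
      rw [hM, Finset.mem_sdiff]
      refine ⟨(hAmem f hf).1, ?_⟩
      simp only [hFi, mem_filter]
      rintro ⟨hfF, -⟩
      exact hno f hf hfF
    have := Finset.card_le_card hAM
    omega
  obtain ⟨f, hfA, hfF⟩ := hexists
  have hfdisj : Disjoint f U := (hAmem f hfA).2
  -- build a rainbow matching for F
  apply hsat.1
  refine ⟨Function.update g i f, ?_, ?_⟩
  · intro j
    by_cases hji : j = i
    · subst hji; rw [Function.update_self]; exact hfF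
    · rw [Function.update_of_ne hji]; exact hgji j hji
  · intro a b hab
    have key : ∀ j : Fin m, j ≠ i → Disjoint f (g j) := by
      intro j hj
      apply Finset.disjoint_of_subset_right _ hfdisj
      exact Finset.subset_biUnion_of_mem g (Finset.mem_erase.mpr ⟨hj, Finset.mem_univ j⟩)
    by_cases hai : a = i
    · subst hai
      rw [Function.update_self, Function.update_of_ne (fun h => hab h.symm)]
      exact key b (fun h => hab h.symm)
    · by_cases hbi : b = i
      · subst hbi
        rw [Function.update_self, Function.update_of_ne hai]
        exact (key a hai).symm
      · rw [Function.update_of_ne hai, Function.update_of_ne hbi]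
        exact hg2 a b hab
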